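/- Let d ≥ 2 and m ≥ 1 be integers with (d−1) dividing (m+1), and set a = (m+1)/(d−1). Let p be a prime dividing d and t = ν_p(d). Let n ≥ 1 be an integer with m ≤ d^{n+1} − 3. If p divides m and m ≠ d − 2, then either B(d,m,n) = 0 or ν_p(B(d,m,n)) > −(ν_p(a!) + t·a). -/

import Mathlib

/-- Generalized binomial coefficient `C_j(x) = x(x-1)⋯(x-j+1)/j!`, with `C_0(x) = 1`. -/
noncomputable def genBinom (x : ℚ) (j : ℕ) : ℚ :=
  (∏ i ∈ Finset.range j, (x - (i : ℚ))) / (Nat.factorial j : ℚ)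

/-- The Ewing–Schober combinatorial formula `B(d,m,n)`: the sum is over all tuples
`(j_1,…,j_n)` of nonnegative integers (here `j : Fin n → ℕ`, 0-indexed, so `j k`
corresponds to `j_{k+1}`) satisfying `Σ_{k=1}^n (d^{n-k+1} - 1) j_k = m + 1`, of
`Π_{k=1}^n C_{j_k}(m/d^{n-k+1} - Σ_{l=1}^{k-1} d^{k-l} j_l)`, multiplied by `-(1/m)`. -/
noncomputable def multibrotB (d m n : ℕ) : ℚ :=
  -(1 / (m : ℚ)) * ∑ᶠ j : Fin n → ℕ,
    if (∑ k : Fin n, (d ^ (n - k.val) - 1) * j k) = m + 1 then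
      ∏ k : Fin n,
        genBinom ((m : ℚ) / (d : ℚ) ^ (n - k.val)
          - ∑ l ∈ Finset.univ.filter (fun l : Fin n => l < k),
              (d : ℚ) ^ (k.val - l.val) * ((j l : ℕ) : ℚ)) (j k)
    else 0

/-! ### Auxiliary definitions and lemmas -/

/-- The summand of the Ewing–Schober formula. -/
noncomputable def multibrotTerm (d m n : ℕ) (j : Fin n → ℕ) : ℚ :=
  if (∑ k : Fin n, (d ^ (n - k.val) - 1) * j k) = m + 1 then
    ∏ k : Fin n,
      genBinom ((m : ℚ) / (d : ℚ) ^ (n - k.val)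
        - ∑ l ∈ Finset.univ.filter (fun l : Fin n => l < k),
            (d : ℚ) ^ (k.val - l.val) * ((j l : ℕ) : ℚ)) (j k)
  else 0

section Helpers

lemma geom_sum_nat (d : ℕ) (hd : 1 ≤ d) (e : ℕ) :
    (d - 1) * ∑ i ∈ Finset.range e, d ^ i = d ^ e - 1 := by
  induction e with
  | zero => simp
  | succ e ih =>
    rw [Finset.sum_range_succ, Nat.mul_add, ih, Nat.sub_mul, one_mul, ← pow_succ']
    have h1 : 1 ≤ d ^ e := Nat.one_le_pow _ _ (by omega)
    have h2 : d ^ e ≤ d ^ (e + 1) := Nat.pow_le_pow_right (by omega) (by omega)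
    omega

lemma sigma_ge_e (d e : ℕ) (hd : 1 ≤ d) : e ≤ ∑ i ∈ Finset.range e, d ^ i := by
  induction e with
  | zero => simp
  | succ e ih =>
    rw [Finset.sum_range_succ]
    have h1 : 1 ≤ d ^ e := Nat.one_le_pow _ _ (by omega)
    omega

lemma sigma_gt_e (d e : ℕ) (hd : 2 ≤ d) (he : 2 ≤ e) :
    e + 1 ≤ ∑ i ∈ Finset.range e, d ^ i := by
  induction e with
  | zero => omega
  | succ e ih =>
    rw [Finset.sum_range_succ]
    rcases Nat.lt_or_ge e 2 with h | h
    · have he1 : e = 1 := by omega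
      subst he1
      have : d ^ 1 = d := pow_one d
      simp only [Finset.sum_range_one, pow_zero]
      omega
    · have h1 : 1 ≤ d ^ e := Nat.one_le_pow _ _ (by omega)
      have := ih (by omega)
      omega

end Helpers

section Val
open Finset
variable {p : ℕ} [hp : Fact p.Prime]

lemma pv_prod {α : Type*} (s : Finset α) (f : α → ℚ) (hf : ∀ i ∈ s, f i ≠ 0) :
    padicValRat p (∏ i ∈ s, f i) = ∑ i ∈ s, padicValRat p (f i) := by
  classical
  induction s using Finset.induction_on with
  | empty => simp
  | insert a s hnot ih =>
    rw [Finset.prod_insert hnot, Finset.sum_insert hnot,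
      padicValRat.mul (hf a (Finset.mem_insert_self a s))
        (Finset.prod_ne_zero_iff.2 fun i hi => hf i (Finset.mem_insert_of_mem hi)),
      ih fun i hi => hf i (Finset.mem_insert_of_mem hi)]

lemma pv_prod_nat {α : Type*} (s : Finset α) (f : α → ℕ) (hf : ∀ i ∈ s, f i ≠ 0) :
    padicValNat p (∏ i ∈ s, f i) = ∑ i ∈ s, padicValNat p (f i) := by
  classical
  induction s using Finset.induction_on with
  | empty => simp
  | insert a s hnot ih =>
    rw [Finset.prod_insert hnot, Finset.sum_insert hnot,
      padicValNat.mul (hf a (Finset.mem_insert_self a s))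
        (Finset.prod_ne_zero_iff.2 fun i hi => hf i (Finset.mem_insert_of_mem hi)),
      ih fun i hi => hf i (Finset.mem_insert_of_mem hi)]

lemma pv_sum {α : Type*} (c : ℤ) (s : Finset α) (f : α → ℚ)
    (hf : ∀ i ∈ s, f i = 0 ∨ c < padicValRat p (f i)) :
    (∑ i ∈ s, f i) = 0 ∨ ((∑ i ∈ s, f i) ≠ 0 ∧ c < padicValRat p (∑ i ∈ s, f i)) := by
  classical
  induction s using Finset.induction_on with
  | empty => simp
  | insert a s hnot ih =>
    rw [Finset.sum_insert hnot]
    rcases hf a (Finset.mem_insert_self a s) with h0 | ha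
    · rw [h0, zero_add]
      exact ih fun i hi => hf i (Finset.mem_insert_of_mem hi)
    · rcases ih (fun i hi => hf i (Finset.mem_insert_of_mem hi)) with h0 | hs
      · rw [h0, add_zero]
        by_cases hz : f a = 0
        · exact Or.inl hz
        · exact Or.inr ⟨hz, ha⟩
      · by_cases hz : f a + ∑ i ∈ s, f i = 0
        · exact Or.inl hz
        · right
          exact ⟨hz, lt_of_lt_of_le (lt_min ha hs.2) (padicValRat.min_le_padicValRat_add hz)⟩

lemma pv_mono {x y : ℕ} (hxy : x ∣ y) (hy : y ≠ 0) : padicValNat p x ≤ padicValNat p y := by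
  rcases Nat.eq_zero_or_pos x with rfl | hx
  · obtain rfl : y = 0 := Nat.eq_zero_of_zero_dvd hxy
    omega
  · exact (padicValNat_dvd_iff_le hy).1 (dvd_trans pow_padicValNat_dvd hxy)

lemma pv_sub_int (x : ℚ) (hden : ¬ p ∣ x.den) (i : ℕ) (hne : x - (i : ℚ) ≠ 0) :
    padicValRat p (x - (i : ℚ)) = padicValInt p (x.num - (i : ℤ) * x.den) := by
  have hd0 : (x.den : ℚ) ≠ 0 := Nat.cast_ne_zero.2 x.den_nz
  have hxe : x - (i : ℚ) = ((x.num - (i : ℤ) * x.den : ℤ) : ℚ) / ((x.den : ℕ) : ℚ) := by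
    have hnd : x * (x.den : ℚ) = (x.num : ℚ) :=
      ((div_eq_iff hd0).1 (Rat.num_div_den x)).symm
    rw [eq_div_iff hd0]
    push_cast
    rw [sub_mul, hnd]
  have hnum0 : x.num - (i : ℤ) * x.den ≠ 0 := by
    intro h
    apply hne
    rw [hxe, h]
    simp
  rw [hxe, padicValRat.div (Int.cast_ne_zero.2 hnum0) (Nat.cast_ne_zero.2 x.den_nz),
    padicValRat.of_int, padicValRat.of_nat, padicValNat.eq_zero_of_not_dvd hden]
  simp

lemma count_cong (q j c : ℕ) (hq : 0 < q) (hc : c < q) :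
    j / q ≤ ((Finset.range j).filter (fun i => i % q = c)).card := by
  classical
  have : (Finset.range (j / q)).card ≤ ((Finset.range j).filter (fun i => i % q = c)).card := by
    apply Finset.card_le_card_of_injOn (fun u => c + u * q)
    · intro u hu
      simp only [Finset.coe_range, Set.mem_Iio, Finset.mem_coe, Finset.mem_range] at hu
      simp only [Finset.mem_coe, Finset.mem_filter, Finset.mem_range]
      constructor
      · calc c + u * q < q + u * q := by omega
          _ = (u + 1) * q := by ring
          _ ≤ (j / q) * q := Nat.mul_le_mul_right q (by omega)
          _ ≤ j := Nat.div_mul_le_self j q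
      · simp [Nat.add_mul_mod_self_right, Nat.mod_eq_of_lt hc]
    · intro u1 _ u2 _ h
      dsimp at h
      exact Nat.eq_of_mul_eq_mul_right hq (by omega)
  simpa using this

lemma key_count (A B : ℤ) (hB : ¬ (p : ℤ) ∣ B) (j r : ℕ) :
    j / p ^ r ≤ ((Finset.range j).filter (fun i : ℕ => ((p : ℤ)) ^ r ∣ (A - (i : ℤ) * B))).card := by
  classical
  set q := p ^ r with hqdef
  have hq : 0 < q := pow_pos hp.out.pos r
  haveI : NeZero q := ⟨hq.ne'⟩
  have hpB : ¬ p ∣ B.natAbs := by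
    intro h
    exact hB (Int.natAbs_dvd_natAbs.1 (by simpa using h))
  have hcop : Nat.Coprime B.natAbs q :=
    Nat.Coprime.pow_right _ (Nat.coprime_comm.1 ((Nat.Prime.coprime_iff_not_dvd hp.out).2 hpB))
  have huAbs : IsUnit ((B.natAbs : ℕ) : ZMod q) := (ZMod.isUnit_iff_coprime _ _).2 hcop
  have hu : IsUnit ((B : ℤ) : ZMod q) := by
    rcases Int.natAbs_eq B with h | h
    · rw [h, Int.cast_natCast]; exact huAbs
    · rw [h, Int.cast_neg, Int.cast_natCast]; exact huAbs.neg
  obtain ⟨b', hb'⟩ := hu.exists_right_inv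
  set c := ((A : ZMod q) * b').val with hcdef
  have hc : c < q := ZMod.val_lt _
  refine le_trans (count_cong q j c hq hc) (Finset.card_le_card ?_)
  intro i hi
  simp only [Finset.mem_filter, Finset.mem_range] at hi ⊢
  refine ⟨hi.1, ?_⟩
  have hiz : ((i : ℕ) : ZMod q) = (A : ZMod q) * b' := by
    rw [← Nat.mod_add_div i q, hi.2]
    push_cast
    simp [ZMod.natCast_self, hcdef, ZMod.natCast_val, ZMod.cast_id]
  have hcast : ((A - (i : ℤ) * B : ℤ) : ZMod q) = 0 := by
    push_cast
    rw [hiz]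
    linear_combination (-((A : ℤ) : ZMod q)) * hb'
  have hdvd := (ZMod.intCast_zmod_eq_zero_iff_dvd _ q).1 hcast
  rw [hqdef] at hdvd
  exact_mod_cast hdvd

lemma sum_val_ge (A B : ℤ) (hB : ¬ (p : ℤ) ∣ B) (j : ℕ)
    (hne : ∀ i < j, A - (i : ℤ) * B ≠ 0) :
    padicValNat p j.factorial ≤ ∑ i ∈ Finset.range j, padicValInt p (A - (i : ℤ) * B) := by
  classical
  set b := Nat.log p j + 1 with hb
  rw [padicValNat_factorial (lt_add_one _)]
  have step1 : ∑ r ∈ Finset.Ico 1 b, j / p ^ r ≤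
      ∑ r ∈ Finset.Ico 1 b,
        ((Finset.range j).filter (fun i : ℕ => ((p : ℤ)) ^ r ∣ (A - (i : ℤ) * B))).card :=
    Finset.sum_le_sum fun r _ => key_count A B hB j r
  refine le_trans step1 ?_
  calc ∑ r ∈ Finset.Ico 1 b, ((Finset.range j).filter
        (fun i : ℕ => ((p : ℤ)) ^ r ∣ (A - (i : ℤ) * B))).card
      = ∑ r ∈ Finset.Ico 1 b, ∑ i ∈ Finset.range j,
          (if ((p : ℤ)) ^ r ∣ (A - (i : ℤ) * B) then 1 else 0) :=
        Finset.sum_congr rfl fun r _ => by rw [Finset.card_filter]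
    _ = ∑ i ∈ Finset.range j, ∑ r ∈ Finset.Ico 1 b,
          (if ((p : ℤ)) ^ r ∣ (A - (i : ℤ) * B) then 1 else 0) := Finset.sum_comm
    _ ≤ ∑ i ∈ Finset.range j, padicValInt p (A - (i : ℤ) * B) := by
        apply Finset.sum_le_sum
        intro i hi
        rw [← Finset.card_filter]
        have hsub : (Finset.Ico 1 b).filter (fun r => ((p : ℤ)) ^ r ∣ (A - (i : ℤ) * B))
            ⊆ Finset.Icc 1 (padicValInt p (A - (i : ℤ) * B)) := by
          intro r hr
          simp only [Finset.mem_filter, Finset.mem_Ico] at hr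
          simp only [Finset.mem_Icc]
          refine ⟨hr.1.1, ?_⟩
          rcases (padicValInt_dvd_iff r (A - (i : ℤ) * B)).1 hr.2 with h0 | hle
          · exact absurd h0 (hne i (Finset.mem_range.1 hi))
          · exact hle
        calc ((Finset.Ico 1 b).filter _).card ≤ _ := Finset.card_le_card hsub
          _ = padicValInt p (A - (i : ℤ) * B) := by rw [Nat.card_Icc]; omega

lemma genBinom_nonneg_val (x : ℚ) (hx : x = 0 ∨ 0 ≤ padicValRat p x) (j : ℕ) :
    genBinom x j = 0 ∨ 0 ≤ padicValRat p (genBinom x j) := by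
  classical
  by_cases h0 : ∏ i ∈ Finset.range j, (x - (i : ℚ)) = 0
  · left; unfold genBinom; rw [h0, zero_div]
  · right
    have hfac : ∀ i ∈ Finset.range j, x - (i : ℚ) ≠ 0 := by
      intro i hi h
      exact h0 (Finset.prod_eq_zero hi h)
    rcases Nat.eq_zero_or_pos j with rfl | hj
    · simp [genBinom]
    have hx0 : x ≠ 0 := by
      have := hfac 0 (Finset.mem_range.2 hj)
      simpa using this
    rcases hx with rfl | hxv
    · exact absurd rfl hx0
    have hden : ¬ p ∣ x.den := by
      intro hdvd
      have h1 : padicValInt p x.num = 0 := by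
        apply padicValInt.eq_zero_of_not_dvd
        intro hnum
        have hd1 : p ∣ x.num.natAbs := by
          have := Int.natAbs_dvd_natAbs.2 hnum
          simpa using this
        have := Nat.dvd_gcd hd1 hdvd
        rw [Nat.Coprime.gcd_eq_one x.reduced] at this
        exact Nat.Prime.one_lt hp.out |>.ne' (Nat.dvd_one.1 this)
      have h2 : 1 ≤ padicValNat p x.den :=
        one_le_padicValNat_of_dvd x.den_nz hdvd
      rw [padicValRat_def, h1] at hxv
      omega
    unfold genBinom
    rw [padicValRat.div h0 (Nat.cast_ne_zero.2 j.factorial_ne_zero),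
      pv_prod _ _ hfac, padicValRat.of_nat,
      Finset.sum_congr rfl (fun i hi => pv_sub_int x hden i (hfac i hi))]
    have hne : ∀ i < j, x.num - (i : ℤ) * x.den ≠ 0 := by
      intro i hi h
      apply hfac i (Finset.mem_range.2 hi)
      have hnd : (x.num : ℚ) = (i : ℚ) * (x.den : ℚ) := by
        exact_mod_cast congrArg (Int.cast : ℤ → ℚ) (by omega : x.num = (i : ℤ) * x.den)
      have hd0 : (x.den : ℚ) ≠ 0 := Nat.cast_ne_zero.2 x.den_nz
      have hxi : x = (i : ℚ) := by
        rw [← Rat.num_div_den x, hnd]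
        field_simp
      rw [hxi]; ring
    have hB : ¬ (p : ℤ) ∣ (x.den : ℤ) := by
      intro h
      exact hden (by exact_mod_cast h)
    have key := sum_val_ge (p := p) x.num x.den hB j hne
    have key' : (padicValNat p j.factorial : ℤ)
        ≤ ∑ i ∈ Finset.range j, (padicValInt p (x.num - (i : ℤ) * x.den) : ℤ) := by
      exact_mod_cast key
    rw [sub_nonneg]
    exact key'

lemma genBinom_neg_val (x : ℚ) (hx0 : x ≠ 0) (hxv : padicValRat p x < 0) (j : ℕ) :
    genBinom x j ≠ 0 ∧ padicValRat p (genBinom x j)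
      = (j : ℤ) * padicValRat p x - padicValNat p j.factorial := by
  have hfac : ∀ i : ℕ, x - (i : ℚ) ≠ 0 ∧ padicValRat p (x - (i : ℚ)) = padicValRat p x := by
    intro i
    rcases Nat.eq_zero_or_pos i with rfl | hi
    · simpa using hx0
    · have hr0 : -((i : ℚ)) ≠ 0 := by
        simp only [neg_ne_zero, Nat.cast_ne_zero]
        omega
      have hrv : padicValRat p (-(i : ℚ)) = (padicValNat p i : ℤ) := by
        rw [padicValRat.neg, padicValRat.of_nat]
      have hlt : padicValRat p x < padicValRat p (-(i : ℚ)) := by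
        rw [hrv]
        exact hxv.trans_le (Int.ofNat_nonneg _)
      have hsum : x + -(i : ℚ) ≠ 0 := by
        intro h
        have hxi : x = (i : ℚ) := by linarith
        rw [hxi, padicValRat.of_nat] at hxv
        omega
      constructor
      · simpa [sub_eq_add_neg] using hsum
      · have := padicValRat.add_eq_of_lt hsum hx0 hr0 hlt
        simpa [sub_eq_add_neg] using this
  have hprod : ∏ i ∈ Finset.range j, (x - (i : ℚ)) ≠ 0 :=
    Finset.prod_ne_zero_iff.2 fun i _ => (hfac i).1
  have hfne : ((j.factorial : ℕ) : ℚ) ≠ 0 := Nat.cast_ne_zero.2 j.factorial_ne_zero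
  constructor
  · exact div_ne_zero hprod hfne
  · unfold genBinom
    rw [padicValRat.div hprod hfne, pv_prod _ _ (fun i _ => (hfac i).1),
      Finset.sum_congr rfl (fun i _ => (hfac i).2), Finset.sum_const, Finset.card_range,
      padicValRat.of_nat, nsmul_eq_mul]

lemma genBinom_succ (x : ℚ) (j : ℕ) (hj : 1 ≤ j) :
    genBinom x j = (x / (j : ℚ)) * genBinom (x - 1) (j - 1) := by
  obtain ⟨j', rfl⟩ : ∃ j', j = j' + 1 := ⟨j - 1, by omega⟩
  unfold genBinom
  rw [Finset.prod_range_succ']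
  simp only [Nat.cast_zero, sub_zero, Nat.add_sub_cancel, Nat.factorial_succ]
  have hrw : ∀ i ∈ Finset.range j', x - ((i + 1 : ℕ) : ℚ) = (x - 1) - (i : ℚ) := by
    intro i _
    push_cast
    ring
  rw [Finset.prod_congr rfl hrw]
  have h1 : ((j' + 1 : ℕ) : ℚ) ≠ 0 := by positivity
  have h2 : ((j'.factorial : ℕ) : ℚ) ≠ 0 := Nat.cast_ne_zero.2 j'.factorial_ne_zero
  field_simp
  push_cast
  ring

lemma genBinom_pos_val (x : ℚ) (hx0 : x ≠ 0) (hxv : 0 ≤ padicValRat p x) (j : ℕ) (hj : 1 ≤ j)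
    (hne : genBinom x j ≠ 0) :
    padicValRat p x - (padicValNat p j : ℤ) ≤ padicValRat p (genBinom x j) := by
  rw [genBinom_succ x j hj]
  have hb : genBinom (x - 1) (j - 1) ≠ 0 := by
    intro h
    apply hne
    rw [genBinom_succ x j hj, h, mul_zero]
  have hjq : ((j : ℕ) : ℚ) ≠ 0 := Nat.cast_ne_zero.2 (by omega)
  have hxj : x / (j : ℚ) ≠ 0 := div_ne_zero hx0 hjq
  rw [padicValRat.mul hxj hb, padicValRat.div hx0 hjq, padicValRat.of_nat]
  have h1 : 0 ≤ padicValRat p (genBinom (x - 1) (j - 1)) := by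
    have hx1 : x - 1 = 0 ∨ 0 ≤ padicValRat p (x - 1) := by
      by_cases h : x - 1 = 0
      · exact Or.inl h
      · right
        have hm : x + (-1 : ℚ) ≠ 0 := by
          intro hz
          apply h
          linarith
        have hmin := padicValRat.min_le_padicValRat_add (p := p) hm
        have hone : padicValRat p (-1 : ℚ) = 0 := by
          rw [padicValRat.neg, padicValRat.one]
        rw [hone] at hmin
        calc (0 : ℤ) ≤ min (padicValRat p x) 0 := le_min hxv le_rfl
          _ ≤ padicValRat p (x + -1) := hmin
          _ = padicValRat p (x - 1) := by rw [sub_eq_add_neg]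
    rcases genBinom_nonneg_val (x - 1) hx1 (j - 1) with h | h
    · exact absurd h hb
    · exact h
  linarith

end Val

lemma term_bound (d m n : ℕ) (hd : 2 ≤ d) (hm : 1 ≤ m) (a : ℕ)
    (haa : a * (d - 1) = m + 1) (ha2 : 2 ≤ a)
    (p : ℕ) [hp : Fact p.Prime] (hpm : p ∣ m) (hpd : p ∣ d)
    (t : ℕ) (ht : t = padicValNat p d)
    (j : Fin n → ℕ) :
    multibrotTerm d m n j = 0 ∨
      (padicValNat p m : ℤ) - (padicValNat p a.factorial : ℤ) - (t : ℤ) * (a : ℤ)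
        < padicValRat p (multibrotTerm d m n j) := by
  classical
  have hmq : (m : ℚ) ≠ 0 := Nat.cast_ne_zero.2 (by omega)
  have hdq : (d : ℚ) ≠ 0 := Nat.cast_ne_zero.2 (by omega)
  have hv1 : 1 ≤ padicValNat p m := one_le_padicValNat_of_dvd (by omega) hpm
  have ht1 : 1 ≤ t := by rw [ht]; exact one_le_padicValNat_of_dvd (by omega) hpd
  have hptd : p ^ t ∣ d := by rw [ht]; exact pow_padicValNat_dvd
  set v := padicValNat p m with hv
  by_cases hcond : (∑ k : Fin n, (d ^ (n - k.val) - 1) * j k) = m + 1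
  swap
  · left; unfold multibrotTerm; rw [if_neg hcond]
  set e : Fin n → ℕ := fun k => n - k.val with he_def
  have he1 : ∀ k : Fin n, 1 ≤ e k := by
    intro k
    have := k.isLt
    simp only [he_def]
    omega
  set sN : Fin n → ℕ :=
    fun k => ∑ l ∈ Finset.univ.filter (fun l : Fin n => l < k), d ^ (k.val - l.val) * j l
    with hsN_def
  set x : Fin n → ℚ := fun k => (m : ℚ) / (d : ℚ) ^ (e k) - (sN k : ℚ) with hx_def
  have hTval : multibrotTerm d m n j = ∏ k : Fin n, genBinom (x k) (j k) := by
    unfold multibrotTerm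
    rw [if_pos hcond]
    apply Finset.prod_congr rfl
    intro k _
    congr 1
    simp only [hx_def, hsN_def, he_def]
    push_cast
    ring
  by_cases hzero : ∃ k : Fin n, genBinom (x k) (j k) = 0
  · left
    rw [hTval]
    obtain ⟨k, hk⟩ := hzero
    exact Finset.prod_eq_zero (Finset.mem_univ k) hk
  push_neg at hzero
  right
  rw [hTval, pv_prod _ _ (fun k _ => hzero k)]
  -- constraint in sigma form
  have hkey : ∑ k : Fin n, (∑ i ∈ Finset.range (e k), d ^ i) * j k = a := by
    apply Nat.eq_of_mul_eq_mul_left (show 0 < d - 1 by omega)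
    rw [Finset.mul_sum]
    have hrw : ∀ k : Fin n, (d - 1) * ((∑ i ∈ Finset.range (e k), d ^ i) * j k)
        = (d ^ (e k) - 1) * j k := by
      intro k
      rw [← mul_assoc, geom_sum_nat d (by omega)]
    rw [Finset.sum_congr rfl (fun k _ => hrw k)]
    have hcond' : ∑ k : Fin n, (d ^ (e k) - 1) * j k = m + 1 := hcond
    rw [hcond', mul_comm]
    exact haa.symm
  have hσpos : ∀ k : Fin n, 1 ≤ ∑ i ∈ Finset.range (e k), d ^ i := by
    intro k
    have h1 := sigma_ge_e d (e k) (by omega)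
    have h2 := he1 k
    omega
  have hσj : ∀ k : Fin n, (∑ i ∈ Finset.range (e k), d ^ i) * j k ≤ a :=
    fun k => hkey ▸ Finset.single_le_sum
      (f := fun k : Fin n => (∑ i ∈ Finset.range (e k), d ^ i) * j k)
      (fun _ _ => Nat.zero_le _) (Finset.mem_univ k)
  have hjk_le : ∀ k : Fin n, j k ≤ a := by
    intro k
    have h1 := hσj k
    have h2 : j k ≤ (∑ i ∈ Finset.range (e k), d ^ i) * j k :=
      Nat.le_mul_of_pos_left (j k) (hσpos k)
    omega
  have hsum_j : ∑ k : Fin n, j k ≤ a := by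
    rw [← hkey]
    exact Finset.sum_le_sum fun k _ => Nat.le_mul_of_pos_left (j k) (hσpos k)
  have he_lt_a : ∀ k : Fin n, 1 ≤ j k → e k < a := by
    intro k hjk
    rcases Nat.lt_or_ge (e k) 2 with h | h
    · omega
    · have h1 : e k + 1 ≤ ∑ i ∈ Finset.range (e k), d ^ i := sigma_gt_e d (e k) hd h
      have h2 : (∑ i ∈ Finset.range (e k), d ^ i) * 1 ≤ (∑ i ∈ Finset.range (e k), d ^ i) * j k :=
        Nat.mul_le_mul_left _ hjk
      have h3 := hσj k
      rw [mul_one] at h2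
      omega
  -- valuation facts
  have hq0 : ∀ k : Fin n, (m : ℚ) / (d : ℚ) ^ (e k) ≠ 0 :=
    fun k => div_ne_zero hmq (pow_ne_zero _ hdq)
  have hvq : ∀ k : Fin n, padicValRat p ((m : ℚ) / (d : ℚ) ^ (e k))
      = (v : ℤ) - (e k : ℤ) * (t : ℤ) := by
    intro k
    rw [padicValRat.div hmq (pow_ne_zero _ hdq), padicValRat.pow (d : ℚ),
      padicValRat.of_nat, padicValRat.of_nat, ← hv, ← ht]
  have hsN_dvd : ∀ k : Fin n, p ^ t ∣ sN k := by
    intro k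
    apply Finset.dvd_sum
    intro l hl
    have hlk : l < k := (Finset.mem_filter.1 hl).2
    have h1 : l.val < k.val := hlk
    exact dvd_mul_of_dvd_left (hptd.trans (dvd_pow_self d (by omega))) _
  have hvsN : ∀ k : Fin n, sN k ≠ 0 → (t : ℤ) ≤ padicValRat p ((sN k : ℚ)) := by
    intro k hk
    rw [padicValRat.of_nat]
    exact_mod_cast (padicValNat_dvd_iff_le hk).1 (hsN_dvd k)
  have htnn : (0 : ℤ) ≤ (t : ℤ) := Int.ofNat_nonneg t
  -- exact valuation when v < e k * t
  have hxneg : ∀ k : Fin n, ((v : ℤ) < (e k : ℤ) * t) →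
      x k ≠ 0 ∧ padicValRat p (x k) = (v : ℤ) - (e k : ℤ) * t := by
    intro k hk
    by_cases hs : sN k = 0
    · have hxk : x k = (m : ℚ) / (d : ℚ) ^ (e k) := by
        simp only [hx_def, hs, Nat.cast_zero, sub_zero]
      rw [hxk]
      exact ⟨hq0 k, hvq k⟩
    · have hr0 : -((sN k : ℚ)) ≠ 0 := by
        simp only [neg_ne_zero, Nat.cast_ne_zero]
        exact hs
      have hlt : padicValRat p ((m : ℚ) / (d : ℚ) ^ (e k)) < padicValRat p (-((sN k : ℚ))) := by
        rw [padicValRat.neg, hvq k]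
        have h2 := hvsN k hs
        linarith
      have hsum : (m : ℚ) / (d : ℚ) ^ (e k) + -((sN k : ℚ)) ≠ 0 := by
        intro hcontra
        have heq : (m : ℚ) / (d : ℚ) ^ (e k) = (sN k : ℚ) := by linarith
        have h3 : padicValRat p ((m : ℚ) / (d : ℚ) ^ (e k)) = padicValRat p ((sN k : ℚ)) := by
          rw [heq]
        rw [hvq k] at h3
        have h2 := hvsN k hs
        linarith
      have hxk : x k = (m : ℚ) / (d : ℚ) ^ (e k) + -((sN k : ℚ)) := by
        simp only [hx_def]
        ring
      rw [hxk]
      refine ⟨hsum, ?_⟩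
      rw [padicValRat.add_eq_of_lt hsum (hq0 k) hr0 hlt, hvq k]
  -- nonneg valuation when e k * t ≤ v
  have hxpos : ∀ k : Fin n, ((e k : ℤ) * t ≤ (v : ℤ)) →
      x k = 0 ∨ 0 ≤ padicValRat p (x k) := by
    intro k hk
    by_cases hx0 : x k = 0
    · exact Or.inl hx0
    right
    by_cases hs : sN k = 0
    · have hxk : x k = (m : ℚ) / (d : ℚ) ^ (e k) := by
        simp only [hx_def, hs, Nat.cast_zero, sub_zero]
      rw [hxk, hvq k]
      linarith
    · have hr0 : -((sN k : ℚ)) ≠ 0 := by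
        simp only [neg_ne_zero, Nat.cast_ne_zero]
        exact hs
      have hxk : x k = (m : ℚ) / (d : ℚ) ^ (e k) + -((sN k : ℚ)) := by
        simp only [hx_def]
        ring
      have hsum : (m : ℚ) / (d : ℚ) ^ (e k) + -((sN k : ℚ)) ≠ 0 := by
        rw [← hxk]
        exact hx0
      have hmin := padicValRat.min_le_padicValRat_add (p := p) hsum
      have h1 : 0 ≤ padicValRat p ((m : ℚ) / (d : ℚ) ^ (e k)) := by
        rw [hvq k]; linarith
      have h2 : 0 ≤ padicValRat p (-((sN k : ℚ))) := by
        rw [padicValRat.neg]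
        have := hvsN k hs
        linarith
      rw [hxk]
      calc (0 : ℤ) ≤ min (padicValRat p ((m : ℚ) / (d : ℚ) ^ (e k)))
            (padicValRat p (-((sN k : ℚ)))) := le_min h1 h2
        _ ≤ _ := hmin
  have hG0 : ∀ k : Fin n, j k = 0 → padicValRat p (genBinom (x k) (j k)) = 0 := by
    intro k h
    rw [h]
    unfold genBinom
    simp
  have hGnn : ∀ k : Fin n, ((e k : ℤ) * t ≤ (v : ℤ)) →
      0 ≤ padicValRat p (genBinom (x k) (j k)) := by
    intro k hk
    rcases genBinom_nonneg_val (x k) (hxpos k hk) (j k) with h | h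
    · exact absurd h (hzero k)
    · exact h
  have hetle : ∀ k : Fin n, 1 ≤ j k → ((e k : ℤ) + 1) * t ≤ (a : ℤ) * t := by
    intro k hk
    have := he_lt_a k hk
    have h1 : ((e k : ℤ) + 1) ≤ (a : ℤ) := by exact_mod_cast this
    exact mul_le_mul_of_nonneg_right h1 htnn
  -- regimes
  by_cases hreg : t * a + padicValNat p a.factorial ≤ v
  · -- Regime II
    have hregz : (t : ℤ) * a + (padicValNat p a.factorial : ℤ) ≤ (v : ℤ) := by exact_mod_cast hreg
    have hex : ∃ k : Fin n, j k ≠ 0 := by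
      by_contra h
      push_neg at h
      have : ∑ k : Fin n, (∑ i ∈ Finset.range (e k), d ^ i) * j k = 0 :=
        Finset.sum_eq_zero fun k _ => by rw [h k, mul_zero]
      omega
    set S1 : Finset (Fin n) := Finset.univ.filter (fun k => j k ≠ 0) with hS1_def
    have hS1ne : S1.Nonempty := by
      obtain ⟨k, hk⟩ := hex
      exact ⟨k, Finset.mem_filter.2 ⟨Finset.mem_univ k, hk⟩⟩
    set k1 := S1.min' hS1ne with hk1_def
    have hk1j : j k1 ≠ 0 := (Finset.mem_filter.1 (S1.min'_mem hS1ne)).2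
    have hk1min : ∀ l : Fin n, l < k1 → j l = 0 := by
      intro l hl
      by_contra h
      have : k1 ≤ l := S1.min'_le l (Finset.mem_filter.2 ⟨Finset.mem_univ l, h⟩)
      exact absurd hl (not_lt.2 this)
    have hsN1 : sN k1 = 0 := by
      apply Finset.sum_eq_zero
      intro l hl
      rw [hk1min l (Finset.mem_filter.1 hl).2, mul_zero]
    have hx1 : x k1 = (m : ℚ) / (d : ℚ) ^ (e k1) := by
      simp only [hx_def, hsN1, Nat.cast_zero, sub_zero]
    have he1a : e k1 < a := he_lt_a k1 (by omega)
    have hQ1 : (e k1 : ℤ) * t ≤ (v : ℤ) := by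
      have := hetle k1 (by omega)
      linarith
    have hx1v : padicValRat p (x k1) = (v : ℤ) - (e k1 : ℤ) * t := by
      rw [hx1]; exact hvq k1
    have hb1 : (v : ℤ) - (e k1 : ℤ) * t - (padicValNat p (j k1) : ℤ)
        ≤ padicValRat p (genBinom (x k1) (j k1)) := by
      have hgp := genBinom_pos_val (x k1) (by rw [hx1]; exact hq0 k1)
        (by rw [hx1v]; linarith) (j k1) (by omega) (hzero k1)
      rw [hx1v] at hgp
      exact hgp
    have hoth : ∀ k : Fin n, k ≠ k1 → 0 ≤ padicValRat p (genBinom (x k) (j k)) := by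
      intro k _
      rcases Nat.eq_zero_or_pos (j k) with h | h
      · rw [hG0 k h]
      · apply hGnn
        have := hetle k (by omega)
        linarith
    have hsum_ge : (v : ℤ) - (e k1 : ℤ) * t - (padicValNat p (j k1) : ℤ)
        ≤ ∑ k : Fin n, padicValRat p (genBinom (x k) (j k)) := by
      have hle : ∀ k ∈ Finset.univ (α := Fin n),
          (if k = k1 then (v : ℤ) - (e k1 : ℤ) * t - (padicValNat p (j k1) : ℤ) else 0)
          ≤ padicValRat p (genBinom (x k) (j k)) := by
        intro k _
        by_cases hk : k = k1
        · subst hk; rw [if_pos rfl]; exact hb1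
        · rw [if_neg hk]; exact hoth k hk
      have := Finset.sum_le_sum hle
      rwa [Finset.sum_ite_eq' Finset.univ k1
        (fun _ => (v : ℤ) - (e k1 : ℤ) * t - (padicValNat p (j k1) : ℤ)),
        if_pos (Finset.mem_univ k1)] at this
    have hj1a : (padicValNat p (j k1) : ℤ) ≤ (padicValNat p a.factorial : ℤ) := by
      exact_mod_cast pv_mono (Nat.dvd_factorial (by omega) (hjk_le k1)) a.factorial_ne_zero
    have hfin : (v : ℤ) - (padicValNat p a.factorial : ℤ) - (t : ℤ) * a
        < (v : ℤ) - (e k1 : ℤ) * t - (padicValNat p (j k1) : ℤ) := by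
      have h1 := hetle k1 (by omega)
      linarith
    exact lt_of_lt_of_le hfin hsum_ge
  · -- Regime I
    push_neg at hreg
    have hregz : (v : ℤ) < (t : ℤ) * a + (padicValNat p a.factorial : ℤ) := by exact_mod_cast hreg
    set P : Finset (Fin n) := Finset.univ.filter (fun k => 1 ≤ j k ∧ v < e k * t) with hP_def
    have hmemP : ∀ k : Fin n, k ∈ P ↔ (1 ≤ j k ∧ v < e k * t) := by
      intro k
      simp [hP_def]
    have hbound : ∀ k ∈ Finset.univ (α := Fin n),
        (if k ∈ P then (j k : ℤ) * ((v : ℤ) - (e k : ℤ) * t) - (padicValNat p (j k).factorial : ℤ)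
          else 0) ≤ padicValRat p (genBinom (x k) (j k)) := by
      intro k _
      by_cases hk : k ∈ P
      · rw [if_pos hk]
        obtain ⟨hj1, hlt⟩ := (hmemP k).1 hk
        have hltz : (v : ℤ) < (e k : ℤ) * t := by exact_mod_cast hlt
        obtain ⟨hx0, hxv⟩ := hxneg k hltz
        have := (genBinom_neg_val (x k) hx0 (by rw [hxv]; linarith) (j k)).2
        rw [this, hxv]
      · rw [if_neg hk]
        rcases Nat.eq_zero_or_pos (j k) with h | h
        · rw [hG0 k h]
        · apply hGnn
          have : ¬ (v < e k * t) := by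
            intro hcon
            exact hk ((hmemP k).2 ⟨h, hcon⟩)
          have hle : e k * t ≤ v := by omega
          exact_mod_cast hle
    have hsum_ge := Finset.sum_le_sum hbound
    rw [Finset.sum_ite_mem, Finset.univ_inter] at hsum_ge
    refine lt_of_lt_of_le ?_ hsum_ge
    -- now pure arithmetic: show C < ∑ k ∈ P, (j k (v - e k t) - νp (j k)!)
    rcases P.eq_empty_or_nonempty with hP | hPne
    · rw [hP]
      simp only [Finset.sum_empty]
      linarith
    · have hfact_le : ∑ k ∈ P, padicValNat p (j k).factorial ≤ padicValNat p a.factorial := by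
        have hd1 : ∏ k ∈ P, (j k).factorial ∣ (∑ k ∈ P, j k).factorial :=
          Nat.prod_factorial_dvd_factorial_sum _ _
        have hsub : ∑ k ∈ P, j k ≤ a :=
          le_trans (Finset.sum_le_sum_of_subset (Finset.filter_subset _ _)) hsum_j
        have hd2 : (∑ k ∈ P, j k).factorial ∣ a.factorial :=
          Nat.factorial_dvd_factorial hsub
        have := pv_mono (p := p) (hd1.trans hd2) a.factorial_ne_zero
        rwa [pv_prod_nat P _ (fun k _ => (j k).factorial_ne_zero)] at this
      have hEP : ∑ k ∈ P, j k * e k ≤ a := by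
        calc ∑ k ∈ P, j k * e k ≤ ∑ k ∈ P, (∑ i ∈ Finset.range (e k), d ^ i) * j k := by
              apply Finset.sum_le_sum
              intro k _
              rw [mul_comm]
              exact Nat.mul_le_mul_right (j k) (sigma_ge_e d (e k) (by omega))
          _ ≤ ∑ k : Fin n, (∑ i ∈ Finset.range (e k), d ^ i) * j k :=
              Finset.sum_le_sum_of_subset (Finset.filter_subset _ _)
          _ = a := hkey
      have hsplit : ∑ k ∈ P, ((j k : ℤ) * ((v : ℤ) - (e k : ℤ) * t)
            - (padicValNat p (j k).factorial : ℤ))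
          = (v : ℤ) * (∑ k ∈ P, (j k : ℤ)) - (t : ℤ) * (∑ k ∈ P, (j k : ℤ) * (e k : ℤ))
            - (∑ k ∈ P, (padicValNat p (j k).factorial : ℤ)) := by
        rw [Finset.mul_sum, Finset.mul_sum, ← Finset.sum_sub_distrib, ← Finset.sum_sub_distrib]
        apply Finset.sum_congr rfl
        intro k _
        ring
      rw [hsplit]
      have hfl : ∑ k ∈ P, (padicValNat p (j k).factorial : ℤ)
          ≤ (padicValNat p a.factorial : ℤ) := by
        rw [← Nat.cast_sum]
        exact Nat.cast_le.2 hfact_le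
      have hEPz : ∑ k ∈ P, (j k : ℤ) * (e k : ℤ) ≤ (a : ℤ) := by
        have h := (Nat.cast_le (α := ℤ)).2 hEP
        rw [Nat.cast_sum] at h
        simp only [Nat.cast_mul] at h
        exact h
      have htEP : (t : ℤ) * (∑ k ∈ P, (j k : ℤ) * (e k : ℤ)) ≤ (t : ℤ) * a :=
        mul_le_mul_of_nonneg_left hEPz htnn
      have hSP1 : 1 ≤ ∑ k ∈ P, j k := by
        obtain ⟨k0, hk0⟩ := hPne
        have h1 := ((hmemP k0).1 hk0).1
        calc 1 ≤ j k0 := h1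
          _ ≤ ∑ k ∈ P, j k := Finset.single_le_sum (fun _ _ => Nat.zero_le _) hk0
      rcases Nat.lt_or_ge (∑ k ∈ P, j k) 2 with hSP | hSP
      · -- ∑ = 1, so P = {k'}
        have hSP1' : ∑ k ∈ P, j k = 1 := by omega
        have hcard : P.card = 1 := by
          have h1 : P.card = ∑ _k ∈ P, 1 := by simp
          have h2 : ∑ _k ∈ P, 1 ≤ ∑ k ∈ P, j k :=
            Finset.sum_le_sum (fun k hk => ((hmemP k).1 hk).1)
          have h3 : 1 ≤ P.card := hPne.card_pos
          omega
        obtain ⟨k', hk'⟩ := Finset.card_eq_one.1 hcard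
        have hjk'1 : j k' = 1 := by
          rw [hk', Finset.sum_singleton] at hSP1'
          exact hSP1'
        have hk'P : k' ∈ P := by rw [hk']; exact Finset.mem_singleton_self k'
        rw [hk', Finset.sum_singleton, Finset.sum_singleton, Finset.sum_singleton, hjk'1,
          Nat.factorial_one]
        have hν1 : padicValNat p 1 = 0 := padicValNat.one
        rw [hν1]
        simp only [Nat.cast_one, Nat.cast_zero, one_mul, mul_one, sub_zero]
        have hetle' := hetle k' (by omega)
        have hνa : (0 : ℤ) ≤ (padicValNat p a.factorial : ℤ) := Int.ofNat_nonneg _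
        have ht1z : (1 : ℤ) ≤ (t : ℤ) := by exact_mod_cast ht1
        linarith
      · have hSPz : (2 : ℤ) ≤ ∑ k ∈ P, (j k : ℤ) := by
          have h := (Nat.cast_le (α := ℤ)).2 hSP
          rw [Nat.cast_sum] at h
          exact_mod_cast h
        have hv1z : (1 : ℤ) ≤ (v : ℤ) := by exact_mod_cast hv1
        have hvSP : (v : ℤ) * 2 ≤ (v : ℤ) * (∑ k ∈ P, (j k : ℤ)) :=
          mul_le_mul_of_nonneg_left hSPz (by positivity)
        linarith

theorem multibrotB_padicValRat_gt (d m n : ℕ) (hd : 2 ≤ d) (hm : 1 ≤ m) (hn : 1 ≤ n)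
    (hdvd : (d - 1) ∣ (m + 1)) (a : ℕ) (ha : a = (m + 1) / (d - 1))
    (p : ℕ) (hp : p.Prime) (hpd : p ∣ d) (t : ℕ) (ht : t = padicValNat p d)
    (hmn : m ≤ d ^ (n + 1) - 3)
    (hpm : p ∣ m) (hne : m ≠ d - 2) :
    multibrotB d m n = 0 ∨
      -((padicValNat p (Nat.factorial a) : ℤ) + (t : ℤ) * (a : ℤ))
        < padicValRat p (multibrotB d m n) := by
  classical
  haveI : Fact p.Prime := ⟨hp⟩
  have hmq : (m : ℚ) ≠ 0 := Nat.cast_ne_zero.2 (by omega)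
  have hdq : (d : ℚ) ≠ 0 := Nat.cast_ne_zero.2 (by omega)
  have haa : a * (d - 1) = m + 1 := by rw [ha]; exact Nat.div_mul_cancel hdvd
  have ha2 : 2 ≤ a := by
    by_contra h
    push_neg at h
    interval_cases a
    · rw [zero_mul] at haa; omega
    · rw [one_mul] at haa
      exact hne (by omega)
  have hv1 : 1 ≤ padicValNat p m := one_le_padicValNat_of_dvd (by omega) hpm
  have ht1 : 1 ≤ t := by rw [ht]; exact one_le_padicValNat_of_dvd (by omega) hpd
  have hptd : p ^ t ∣ d := by rw [ht]; exact pow_padicValNat_dvd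
  set v := padicValNat p m with hv
  set C : ℤ := (v : ℤ) - (padicValNat p a.factorial : ℤ) - (t : ℤ) * (a : ℤ) with hC
  set 𝒥 : Finset (Fin n → ℕ) := Fintype.piFinset (fun _ : Fin n => Finset.range (m + 2)) with h𝒥
  have hBe : multibrotB d m n = -(1 / (m : ℚ)) * ∑ j ∈ 𝒥, multibrotTerm d m n j := by
    unfold multibrotB
    congr 1
    refine finsum_eq_sum_of_support_subset _ ?_
    intro j hj
    simp only [Function.mem_support] at hj
    have hcond : (∑ k : Fin n, (d ^ (n - k.val) - 1) * j k) = m + 1 := by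
      by_contra h
      exact hj (by rw [if_neg h])
    simp only [h𝒥, Finset.coe_sort_coe, Finset.mem_coe, Fintype.mem_piFinset,
      Finset.mem_range]
    intro k
    have h1 : (d ^ (n - k.val) - 1) * j k ≤ m + 1 :=
      hcond ▸ Finset.single_le_sum (f := fun k : Fin n => (d ^ (n - k.val) - 1) * j k)
        (fun _ _ => Nat.zero_le _) (Finset.mem_univ k)
    have h2 : 2 ≤ d ^ (n - k.val) := by
      calc 2 ≤ d := hd
        _ = d ^ 1 := (pow_one d).symm
        _ ≤ d ^ (n - k.val) := Nat.pow_le_pow_right (by omega) (by have := k.isLt; omega)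
    have h3 : j k ≤ (d ^ (n - k.val) - 1) * j k := Nat.le_mul_of_pos_left (j k) (by omega)
    omega
  have hterm : ∀ j ∈ 𝒥, multibrotTerm d m n j = 0 ∨ C < padicValRat p (multibrotTerm d m n j) := by
    intro j _
    exact term_bound d m n hd hm a haa ha2 p hpm hpd t ht j
  rcases pv_sum C 𝒥 _ hterm with h0 | ⟨hS0, hgt⟩
  · left; rw [hBe, h0, mul_zero]
  · right
    rw [hBe]
    have hc0 : -(1 / (m : ℚ)) ≠ 0 := by
      simp only [ne_eq, neg_eq_zero, one_div, inv_eq_zero]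
      exact hmq
    rw [padicValRat.mul hc0 hS0]
    have hval : padicValRat p (-(1 / (m : ℚ))) = -(v : ℤ) := by
      rw [show -(1 / (m : ℚ)) = -((m : ℚ))⁻¹ by rw [one_div], padicValRat.neg,
        padicValRat.inv, padicValRat.of_nat]
    rw [hval]
    rw [hC] at hgt
    omega
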